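/- arXiv:2502.18820 — 3 statements merged into one kernel-verified Lean document; each statement's English description precedes it below -/
import Mathlib

section
/- For every α in (1,3), the integral ∫₀^∞ (x - sin x)/x^{α+1} dx converges and equals π C_α / α, where C_α = (1/π) ∫₀^∞ (1 - cos x)/x^α dx. -/
open MeasureTheory Set Real

/-- Generic integrability criterion on `(0, ∞)` from a power bound near `0` and near `∞`. -/
lemma aux_integrableOn (f : ℝ → ℝ) (p q C₁ C₂ : ℝ) (hp : -1 < p) (hq : q < -1)
    (hcont : ContinuousOn f (Set.Ioi 0))
    (h0 : ∀ x ∈ Set.Ioo (0:ℝ) 1, |f x| ≤ C₁ * x ^ p)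
    (hinf : ∀ x ∈ Set.Ici (1:ℝ), |f x| ≤ C₂ * x ^ q) :
    IntegrableOn f (Set.Ioi 0) := by
  have hsplit : Set.Ioo (0:ℝ) 1 ∪ Set.Ici 1 = Set.Ioi 0 :=
    Set.Ioo_union_Ici_eq_Ioi one_pos
  rw [← hsplit]
  apply IntegrableOn.union
  · have hbase : IntegrableOn (fun x : ℝ => C₁ * x ^ p) (Set.Ioo (0:ℝ) 1) :=
      ((intervalIntegral.integrableOn_Ioo_rpow_iff one_pos).mpr hp).const_mul C₁
    refine Integrable.mono' hbase
      ((hcont.mono (fun x hx => hx.1)).aestronglyMeasurable measurableSet_Ioo) ?_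
    filter_upwards [ae_restrict_mem measurableSet_Ioo] with x hx
    exact h0 x hx
  · have hbase : IntegrableOn (fun x : ℝ => C₂ * x ^ q) (Set.Ici (1:ℝ)) := by
      rw [integrableOn_Ici_iff_integrableOn_Ioi]
      exact (integrableOn_Ioi_rpow_of_lt hq one_pos).const_mul C₂
    refine Integrable.mono' hbase
      ((hcont.mono (fun x (hx : x ∈ Set.Ici (1:ℝ)) => Set.mem_Ioi.mpr (lt_of_lt_of_le one_pos (Set.mem_Ici.mp hx)))).aestronglyMeasurable
        measurableSet_Ici) ?_
    filter_upwards [ae_restrict_mem measurableSet_Ici] with x hx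
    exact hinf x hx

theorem stmt2 (α : ℝ) (hα : α ∈ Set.Ioo (1:ℝ) 3) :
    IntegrableOn (fun x : ℝ => (x - Real.sin x) / x ^ (α + 1)) (Set.Ioi 0) ∧
    ∫ x in Set.Ioi (0:ℝ), (x - Real.sin x) / x ^ (α + 1)
      = π * ((1 / π) * ∫ x in Set.Ioi (0:ℝ), (1 - Real.cos x) / x ^ α) / α := by
  obtain ⟨hα1, hα3⟩ := hα
  -- Integrability of (x - sin x)/x^(α+1)
  have hint2 : IntegrableOn (fun x : ℝ => (x - Real.sin x) / x ^ (α + 1)) (Set.Ioi 0) := by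
    apply aux_integrableOn _ (2 - α) (-α) (1/4) 2 (by linarith) (by linarith)
    · apply ContinuousOn.div (by fun_prop)
        (fun x hx => (Real.continuousAt_rpow_const x _ (Or.inl (ne_of_gt hx))).continuousWithinAt)
      intro x hx
      exact ne_of_gt (Real.rpow_pos_of_pos hx _)
    · intro x ⟨hx0, hx1⟩
      have hs : x - x ^ 3 / 4 < Real.sin x := by
        have := Real.sin_gt_sub_cube hx0; linarith [pow_pos hx0 3]
      have hnn : 0 ≤ x - Real.sin x := by
        have := Real.sin_le hx0.le; linarith
      have hpow : (0:ℝ) < x ^ (α + 1) := Real.rpow_pos_of_pos hx0 _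
      rw [abs_of_nonneg (div_nonneg hnn hpow.le)]
      have h1 : x - Real.sin x ≤ x ^ 3 / 4 := by linarith
      have e : x ^ (3:ℕ) / x ^ (α + 1) = x ^ (2 - α) := by
        rw [← Real.rpow_natCast x 3, ← Real.rpow_sub hx0]
        norm_num
        congr 1; ring
      calc (x - Real.sin x) / x ^ (α + 1) ≤ (x ^ 3 / 4) / x ^ (α + 1) :=
            div_le_div_of_nonneg_right h1 hpow.le
          _ = 1/4 * x ^ (2 - α) := by
            rw [div_right_comm, e]; ring
    · intro x hx
      have hx1 : (1:ℝ) ≤ x := hx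
      have hx0 : (0:ℝ) < x := lt_of_lt_of_le one_pos hx1
      have hnn : 0 ≤ x - Real.sin x := by
        have := Real.sin_le hx0.le; linarith
      have hpow : (0:ℝ) < x ^ (α + 1) := Real.rpow_pos_of_pos hx0 _
      rw [abs_of_nonneg (div_nonneg hnn hpow.le)]
      have h1 : x - Real.sin x ≤ 2 * x := by
        have := Real.neg_one_le_sin x; linarith
      have e : x / x ^ (α + 1) = x ^ (-α) := by
        nth_rewrite 1 [← Real.rpow_one x]
        rw [← Real.rpow_sub hx0]
        norm_num
      calc (x - Real.sin x) / x ^ (α + 1) ≤ (2 * x) / x ^ (α + 1) :=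
            div_le_div_of_nonneg_right h1 hpow.le
          _ = 2 * x ^ (-α) := by rw [mul_div_assoc, e]
  -- Integrability of (1 - cos x)/x^α
  have hint1 : IntegrableOn (fun x : ℝ => (1 - Real.cos x) / x ^ α) (Set.Ioi 0) := by
    apply aux_integrableOn _ (2 - α) (-α) (1/2) 2 (by linarith) (by linarith)
    · apply ContinuousOn.div (by fun_prop)
        (fun x hx => (Real.continuousAt_rpow_const x _ (Or.inl (ne_of_gt hx))).continuousWithinAt)
      intro x hx
      exact ne_of_gt (Real.rpow_pos_of_pos hx _)
    · intro x ⟨hx0, _⟩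
      have hc : 1 - x ^ 2 / 2 ≤ Real.cos x := Real.one_sub_sq_div_two_le_cos
      have hnn : 0 ≤ 1 - Real.cos x := by have := Real.cos_le_one x; linarith
      have hpow : (0:ℝ) < x ^ α := Real.rpow_pos_of_pos hx0 _
      rw [abs_of_nonneg (div_nonneg hnn hpow.le)]
      have e : x ^ (2:ℕ) / x ^ α = x ^ (2 - α) := by
        rw [← Real.rpow_natCast x 2, ← Real.rpow_sub hx0]
        norm_num
      calc (1 - Real.cos x) / x ^ α ≤ (x ^ 2 / 2) / x ^ α :=
            div_le_div_of_nonneg_right (by linarith) hpow.le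
          _ = 1/2 * x ^ (2 - α) := by
            rw [div_right_comm, e]; ring
    · intro x hx
      have hx1 : (1:ℝ) ≤ x := hx
      have hx0 : (0:ℝ) < x := lt_of_lt_of_le one_pos hx1
      have hnn : 0 ≤ 1 - Real.cos x := by have := Real.cos_le_one x; linarith
      have hpow : (0:ℝ) < x ^ α := Real.rpow_pos_of_pos hx0 _
      rw [abs_of_nonneg (div_nonneg hnn hpow.le)]
      calc (1 - Real.cos x) / x ^ α ≤ 2 / x ^ α := by
            apply div_le_div_of_nonneg_right _ hpow.le
            have := Real.neg_one_le_cos x; linarith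
          _ = 2 * x ^ (-α) := by
            rw [Real.rpow_neg hx0.le]; ring
  refine ⟨hint2, ?_⟩
  -- Integration by parts via F(x) = (x - sin x) * x^(-α)
  set F : ℝ → ℝ := fun x => (x - Real.sin x) * x ^ (-α) with hF
  set F' : ℝ → ℝ := fun x =>
    (1 - Real.cos x) / x ^ α - α * ((x - Real.sin x) / x ^ (α + 1)) with hF'
  have hderiv : ∀ x ∈ Set.Ioi (0:ℝ), HasDerivAt F (F' x) x := by
    intro x hx
    have hx0 : (0:ℝ) < x := hx
    have h1 : HasDerivAt (fun y : ℝ => y - Real.sin y) (1 - Real.cos x) x :=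
      (hasDerivAt_id x).sub (Real.hasDerivAt_sin x)
    have h2 : HasDerivAt (fun y : ℝ => y ^ (-α)) (-α * x ^ (-α - 1)) x :=
      Real.hasDerivAt_rpow_const (Or.inl (ne_of_gt hx0))
    have h3 := h1.mul h2
    refine HasDerivAt.congr_deriv h3 ?_
    have e1 : x ^ (-α) = (x ^ α)⁻¹ := Real.rpow_neg hx0.le α
    have e2 : x ^ (-α - 1) = (x ^ (α+1))⁻¹ := by
      rw [show -α - 1 = -(α+1) by ring, Real.rpow_neg hx0.le]
    rw [hF']
    simp only [e1, e2, div_eq_mul_inv]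
    ring
  have hcont0 : ContinuousWithinAt F (Set.Ici 0) 0 := by
    have hF0 : F 0 = 0 := by simp [hF]
    rw [ContinuousWithinAt, hF0]
    apply squeeze_zero_norm' (a := fun x : ℝ => x ^ (3 - α) / 4)
    · filter_upwards [Icc_mem_nhdsGE_of_mem (by constructor <;> norm_num :
        (0:ℝ) ∈ Set.Ico 0 1)] with x ⟨hx0, hx1⟩
      rcases eq_or_lt_of_le hx0 with rfl | hx0'
      · simp [hF, Real.zero_rpow (by linarith : (3:ℝ) - α ≠ 0),
          Real.zero_rpow (by intro h; rw [neg_eq_zero] at h; linarith : -α ≠ 0)]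
      · have hs : x - x ^ 3 / 4 < Real.sin x := by
            have := Real.sin_gt_sub_cube hx0'; linarith [pow_pos hx0' 3]
        have hnn : 0 ≤ x - Real.sin x := by have := Real.sin_le hx0; linarith
        have hpow : (0:ℝ) ≤ x ^ (-α) := (Real.rpow_pos_of_pos hx0' _).le
        rw [Real.norm_eq_abs, hF, abs_of_nonneg (mul_nonneg hnn hpow)]
        have e : x ^ (3:ℕ) * x ^ (-α) = x ^ (3 - α) := by
          rw [← Real.rpow_natCast x 3, ← Real.rpow_add hx0']
          norm_num [sub_eq_add_neg]
        calc (x - Real.sin x) * x ^ (-α) ≤ (x ^ 3 / 4) * x ^ (-α) :=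
              mul_le_mul_of_nonneg_right (by linarith) hpow
            _ = x ^ (3 - α) / 4 := by rw [div_mul_eq_mul_div, e]
    · have : Filter.Tendsto (fun x : ℝ => x ^ (3 - α)) (nhds 0) (nhds ((0:ℝ) ^ (3 - α))) :=
        (Real.continuousAt_rpow_const 0 (3 - α) (Or.inr (by linarith))).tendsto
      rw [Real.zero_rpow (by linarith : (3:ℝ) - α ≠ 0)] at this
      simpa using (this.mono_left nhdsWithin_le_nhds).div_const 4
  have htop : Filter.Tendsto F Filter.atTop (nhds 0) := by
    apply squeeze_zero_norm' (a := fun x : ℝ => 2 * x ^ (1 - α))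
    · filter_upwards [Filter.eventually_ge_atTop (1:ℝ)] with x hx
      have hx0 : (0:ℝ) < x := lt_of_lt_of_le one_pos hx
      have hnn : 0 ≤ x - Real.sin x := by have := Real.sin_le hx0.le; linarith
      have hpow : (0:ℝ) ≤ x ^ (-α) := (Real.rpow_pos_of_pos hx0 _).le
      rw [Real.norm_eq_abs, hF, abs_of_nonneg (mul_nonneg hnn hpow)]
      have h1 : x - Real.sin x ≤ 2 * x := by have := Real.neg_one_le_sin x; linarith
      have e : x * x ^ (-α) = x ^ (1 - α) := by
        nth_rewrite 1 [← Real.rpow_one x]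
        rw [← Real.rpow_add hx0]
        norm_num [sub_eq_add_neg]
      calc (x - Real.sin x) * x ^ (-α) ≤ (2 * x) * x ^ (-α) :=
            mul_le_mul_of_nonneg_right h1 hpow
          _ = 2 * x ^ (1 - α) := by rw [mul_assoc, e]
    · have := tendsto_rpow_neg_atTop (by linarith : (0:ℝ) < α - 1)
      rw [show -(α - 1) = 1 - α by ring] at this
      simpa using this.const_mul 2
  have hF'int : IntegrableOn F' (Set.Ioi 0) := hint1.sub (hint2.const_mul α)
  have hIBP := integral_Ioi_of_hasDerivAt_of_tendsto hcont0 hderiv hF'int htop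
  have hF0 : F 0 = 0 := by simp [hF]
  rw [hF0, sub_zero] at hIBP
  have hsplit2 : ∫ x in Set.Ioi (0:ℝ), F' x
      = (∫ x in Set.Ioi (0:ℝ), (1 - Real.cos x) / x ^ α)
        - α * ∫ x in Set.Ioi (0:ℝ), (x - Real.sin x) / x ^ (α + 1) := by
    rw [hF']
    rw [integral_sub hint1 (hint2.const_mul α), integral_const_mul]
  rw [hsplit2] at hIBP
  have hπ : (π:ℝ) ≠ 0 := Real.pi_ne_zero
  have hαne : α ≠ 0 := by linarith
  field_simp
  linarith [hIBP]
end

section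
/- Let ν be a Lévy measure on ℝ, b ∈ ℝ, and define ω(λ) = bλ + ∫ℝ (λx·1_{|x|<1} - sin(λx)) ν(dx). Then lim_{λ→∞} ω(λ)/λ² = 0. -/
open MeasureTheory Set Filter Topology Real

lemma sin_ge_sub_sq (t : ℝ) (ht : 0 ≤ t) : t - t ^ 2 ≤ Real.sin t := by
  rcases eq_or_lt_of_le ht with h | h
  · simp [← h]
  rcases le_or_gt t 1 with h1 | h1
  · have := Real.sin_gt_sub_cube h
    nlinarith
  rcases le_or_gt t 2 with h2 | h2
  · have hπ := Real.pi_gt_three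
    have := Real.sin_nonneg_of_nonneg_of_le_pi ht (by linarith)
    nlinarith
  · have := Real.neg_one_le_sin t
    nlinarith

lemma abs_sub_sin_le_sq (t : ℝ) : |t - Real.sin t| ≤ t ^ 2 := by
  rcases le_or_gt 0 t with ht | ht
  · rw [abs_le]
    constructor
    · have := Real.sin_le ht
      nlinarith [sq_nonneg t]
    · have := sin_ge_sub_sq t ht
      linarith
  · have h := sin_ge_sub_sq (-t) (by linarith)
    have h2 : Real.sin t ≤ t + t ^ 2 := by
      rw [Real.sin_neg] at h; nlinarith
    have h3 : t ≤ Real.sin t := by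
      have := Real.sin_le (show (0:ℝ) ≤ -t by linarith)
      rw [Real.sin_neg] at this; linarith
    rw [abs_le]; constructor <;> nlinarith [sq_nonneg t]

theorem stmt4 (ν : Measure ℝ) (hν0 : ν {0} = 0)
    (hνint : ∫⁻ x, ENNReal.ofReal (min (x ^ 2) 1) ∂ν < ⊤)
    (b : ℝ) (ω : ℝ → ℝ)
    (hω : ∀ l : ℝ, ω l = b * l
        + ∫ x, (l * x * (if |x| < 1 then (1:ℝ) else 0) - Real.sin (l * x)) ∂ν) :
    Tendsto (fun l : ℝ => ω l / l ^ 2) atTop (𝓝 0) := by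
  set F : ℝ → ℝ → ℝ := fun l x =>
    (l * x * (if |x| < 1 then (1:ℝ) else 0) - Real.sin (l * x)) / l ^ 2 with hF
  -- integrable bound
  have hbound_int : Integrable (fun x : ℝ => min (x ^ 2) 1) ν := by
    refine ⟨((continuous_pow 2).min continuous_const).aestronglyMeasurable, ?_⟩
    rw [hasFiniteIntegral_iff_ofReal
      (ae_of_all _ fun x => le_min (sq_nonneg x) one_pos.le)]
    exact hνint
  -- DCT
  have hDCT : Tendsto (fun l => ∫ x, F l x ∂ν) atTop (𝓝 0) := by
    have := tendsto_integral_filter_of_dominated_convergence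
      (μ := ν) (l := atTop) (F := F) (f := fun _ => (0:ℝ)) (fun x => min (x ^ 2) 1)
      ?_ ?_ hbound_int ?_
    · simpa using this
    · filter_upwards with l
      apply Measurable.aestronglyMeasurable
      apply Measurable.div_const
      apply Measurable.sub
      · exact (measurable_const.mul measurable_id).mul
          (Measurable.ite (measurableSet_lt measurable_abs measurable_const)
            measurable_const measurable_const)
      · exact Real.measurable_sin.comp (measurable_const.mul measurable_id)
    · filter_upwards [eventually_ge_atTop (1:ℝ)] with l hl
      filter_upwards with x
      have hl0 : (0:ℝ) < l := lt_of_lt_of_le one_pos hl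
      have hl2 : (0:ℝ) < l ^ 2 := by positivity
      simp only [hF, norm_div, Real.norm_eq_abs, abs_pow, abs_of_pos hl0]
      rw [div_le_iff₀ hl2]
      rcases lt_or_ge (|x|) 1 with hx | hx
      · simp only [if_pos hx]
        have := abs_sub_sin_le_sq (l * x)
        have hmin : min (x ^ 2) 1 = x ^ 2 := by
          apply min_eq_left
          nlinarith [abs_nonneg x, sq_abs x]
        rw [hmin, mul_one]
        nlinarith [sq_abs x, sq_abs (l * x), this]
      · simp only [if_neg (not_lt.mpr hx)]
        have hmin : min (x ^ 2) 1 = 1 := by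
          apply min_eq_right
          nlinarith [sq_abs x]
        have := Real.abs_sin_le_one (l * x)
        rw [hmin, one_mul, mul_zero, zero_sub, abs_neg]
        nlinarith
    · filter_upwards with x
      have hg : Tendsto (fun l : ℝ => (|x| + 1) / l) atTop (𝓝 0) :=
        tendsto_const_nhds.div_atTop tendsto_id
      refine squeeze_zero_norm' ?_ hg
      filter_upwards [eventually_ge_atTop (1:ℝ)] with l hl
      have hl0 : (0:ℝ) < l := lt_of_lt_of_le one_pos hl
      have hl2 : (0:ℝ) < l ^ 2 := by positivity
      simp only [hF, norm_div, Real.norm_eq_abs, abs_pow, abs_of_pos hl0]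
      rw [div_le_div_iff₀ hl2 hl0]
      have h1 : |l * x * (if |x| < 1 then (1:ℝ) else 0) - Real.sin (l * x)|
          ≤ l * |x| + 1 := by
        have h2 : |l * x * (if |x| < 1 then (1:ℝ) else 0)| ≤ l * |x| := by
          split <;> simp [abs_mul, abs_of_pos hl0] <;> positivity
        have h3 := Real.abs_sin_le_one (l * x)
        calc |l * x * (if |x| < 1 then (1:ℝ) else 0) - Real.sin (l * x)|
            ≤ |l * x * (if |x| < 1 then (1:ℝ) else 0)| + |Real.sin (l * x)| :=
              abs_sub _ _
          _ ≤ l * |x| + 1 := add_le_add h2 h3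
      nlinarith [abs_nonneg x]
-- combine
  have hsum : Tendsto (fun l : ℝ => b / l + ∫ x, F l x ∂ν) atTop (𝓝 (0 + 0)) :=
    (tendsto_const_nhds.div_atTop tendsto_id).add hDCT
  rw [add_zero] at hsum
  apply hsum.congr'
  filter_upwards [eventually_ge_atTop (1:ℝ)] with l hl
  have hl0 : l ≠ 0 := by
    intro h; rw [h] at hl; linarith
  simp only [hF]
  rw [hω l, add_div, ← integral_div]
  congr 1
  field_simp
end

section
/- Suppose Assumption (A) holds: for every q > 0, ∫₀^∞ dλ/|q + Ψ(λ)| < ∞, where Ψ is the Lévy–Khinchin exponent of a one-dimensional Lévy process. Then ∫₀^∞ (λ² ∧ 1)/|Ψ(λ)| dλ < ∞. -/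
open MeasureTheory Set Filter Topology Real

noncomputable def gg (l x : ℝ) : ℂ :=
  (1 : ℂ) - Complex.exp (Complex.I * (l * x)) + Complex.I * (l * x) * (if |x| < 1 then 1 else 0)

lemma sq_abs_expI (θ : ℝ) :
    ‖Complex.exp (Complex.I * θ) - 1‖ ^ 2 = 2 * (1 - Real.cos θ) := by
  rw [show Complex.I * (θ:ℂ) = (θ:ℂ) * Complex.I by ring, Complex.exp_mul_I]
  rw [Complex.sq_norm, Complex.normSq_apply]
  simp [Complex.cos_ofReal_re, Complex.sin_ofReal_re]
  nlinarith [Real.sin_sq_add_cos_sq θ]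

lemma abs_expI_le_abs (θ : ℝ) : ‖Complex.exp (Complex.I * θ) - 1‖ ≤ |θ| := by
  have h1 := sq_abs_expI θ
  have h2 : 1 - θ^2/2 ≤ Real.cos θ := Real.one_sub_sq_div_two_le_cos
  have h3 := norm_nonneg (Complex.exp (Complex.I * θ) - 1)
  nlinarith [abs_nonneg θ, _root_.sq_abs θ]

lemma abs_expI_le_two (θ : ℝ) : ‖Complex.exp (Complex.I * θ) - 1‖ ≤ 2 := by
  have h1 := sq_abs_expI θ
  have h2 := Real.neg_one_le_cos θ
  have h3 := norm_nonneg (Complex.exp (Complex.I * θ) - 1)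
  nlinarith

lemma one_sub_cos_nonneg (θ : ℝ) : 0 ≤ 1 - Real.cos θ := by
  nlinarith [Real.cos_le_one θ]

lemma one_sub_cos_le (θ : ℝ) : 1 - Real.cos θ ≤ θ^2/2 := by
  nlinarith [Real.one_sub_sq_div_two_le_cos (x := θ)]

lemma gg_bound (l x : ℝ) : ‖gg l x‖ ≤ (|l|+2)*(l^2+2) * min (x^2) 1 := by
  have hl2 : (0:ℝ) ≤ l^2 := sq_nonneg l
  have hal : (0:ℝ) ≤ |l| := abs_nonneg l
  rcases le_or_gt 1 |x| with h1 | h1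
  · have hx1 : (1:ℝ) ≤ x^2 := by nlinarith [_root_.sq_abs x]
    have hmin : min (x^2) 1 = 1 := min_eq_right hx1
    have : gg l x = -(Complex.exp (Complex.I * ((l*x : ℝ):ℂ)) - 1) := by
      unfold gg
      rw [if_neg (not_lt.2 h1)]
      push_cast
      ring
    rw [this, norm_neg]
    calc ‖_‖ ≤ 2 := abs_expI_le_two (l*x)
    _ ≤ (|l|+2)*(l^2+2) * min (x^2) 1 := by rw [hmin]; nlinarith
  · have hx1 : x^2 < 1 := by nlinarith [_root_.sq_abs x, abs_nonneg x]
    have hmin : min (x^2) 1 = x^2 := min_eq_left hx1.le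
    have hgg : gg l x = -(Complex.exp (Complex.I * ((l*x : ℝ):ℂ)) - 1 - Complex.I * ((l*x : ℝ):ℂ)) := by
      unfold gg
      rw [if_pos h1]
      push_cast
      ring
    have habsz : ‖Complex.I * ((l*x : ℝ):ℂ)‖ = |l*x| := by
      rw [norm_mul, Complex.norm_I, Complex.norm_real, Real.norm_eq_abs, one_mul]
    rcases le_or_gt |l*x| 1 with h2 | h2
    · rw [hgg, norm_neg]
      calc ‖_‖ ≤ ‖Complex.I * ((l*x : ℝ):ℂ)‖ ^ 2 :=
            Complex.norm_exp_sub_one_sub_id_le (by rw [habsz]; exact h2)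
      _ = (l*x)^2 := by rw [habsz, _root_.sq_abs]
      _ ≤ (|l|+2)*(l^2+2) * min (x^2) 1 := by rw [hmin]; nlinarith [sq_nonneg x, sq_nonneg (l*x)]
    · have hlx : 1 < l^2 * x^2 := by nlinarith [_root_.sq_abs (l*x)]
      rw [hgg, norm_neg]
      calc ‖_‖ ≤ ‖Complex.exp (Complex.I * ((l*x : ℝ):ℂ)) - 1‖
            + ‖Complex.I * ((l*x : ℝ):ℂ)‖ := by
              apply (norm_sub_le _ _)
      _ ≤ 2 + |l| * |x| := by
            rw [habsz, abs_mul]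
            exact add_le_add (abs_expI_le_two (l*x)) le_rfl
      _ ≤ (|l|+2)*(l^2+2) * min (x^2) 1 := by
            rw [hmin]
            nlinarith [abs_nonneg x, _root_.sq_abs x]

lemma integrable_min_sq (ν : Measure ℝ) (hνint : ∫⁻ x, ENNReal.ofReal (min (x ^ 2) 1) ∂ν < ⊤) :
    Integrable (fun x => min (x^2) 1) ν := by
  constructor
  · exact ((measurable_id.pow_const 2).min measurable_const).aestronglyMeasurable
  · rw [hasFiniteIntegral_iff_ofReal (Eventually.of_forall fun x => le_min (sq_nonneg x) one_pos.le)]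
    exact hνint

lemma gg_meas (l : ℝ) : Measurable (gg l) := by
  unfold gg
  apply Measurable.add
  · apply Measurable.sub measurable_const
    exact Complex.measurable_exp.comp (measurable_const.mul
      (measurable_const.mul Complex.measurable_ofReal))
  · apply Measurable.mul
    · exact measurable_const.mul (measurable_const.mul Complex.measurable_ofReal)
    · exact Measurable.ite (measurableSet_lt (measurable_id.abs) measurable_const)
        measurable_const measurable_const

section main
variable {ν : Measure ℝ}

lemma gg_integrable (hνint : ∫⁻ x, ENNReal.ofReal (min (x ^ 2) 1) ∂ν < ⊤) (l : ℝ) : Integrable (gg l) ν := by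
  apply Integrable.mono' ((integrable_min_sq ν hνint).const_mul ((|l|+2)*(l^2+2)))
  · exact (gg_meas l).aestronglyMeasurable
  · exact Eventually.of_forall fun x => gg_bound l x

lemma one_sub_cos_integrable (hνint : ∫⁻ x, ENNReal.ofReal (min (x ^ 2) 1) ∂ν < ⊤) (l : ℝ) : Integrable (fun x => 1 - Real.cos (l*x)) ν := by
  apply Integrable.mono' ((integrable_min_sq ν hνint).const_mul (l^2+2))
  · exact (measurable_const.sub (Real.measurable_cos.comp (measurable_const.mul measurable_id))).aestronglyMeasurable
  · refine Eventually.of_forall fun x => ?_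
    rw [Real.norm_eq_abs, _root_.abs_of_nonneg (one_sub_cos_nonneg _)]
    rcases le_or_gt 1 |x| with h1 | h1
    · have hx1 : (1:ℝ) ≤ x^2 := by nlinarith [_root_.sq_abs x]
      calc 1 - Real.cos (l*x) ≤ 2 := by nlinarith [Real.neg_one_le_cos (l*x)]
      _ ≤ (l^2+2) * min (x^2) 1 := by rw [min_eq_right hx1]; nlinarith [sq_nonneg l]
    · have hx1 : x^2 ≤ 1 := by nlinarith [_root_.sq_abs x, abs_nonneg x]
      calc 1 - Real.cos (l*x) ≤ (l*x)^2/2 := one_sub_cos_le _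
      _ ≤ (l^2+2) * min (x^2) 1 := by rw [min_eq_left hx1]; nlinarith [sq_nonneg l, sq_nonneg x, sq_nonneg (l*x)]

lemma EE_integrable (hνint : ∫⁻ x, ENNReal.ofReal (min (x ^ 2) 1) ∂ν < ⊤) (l m : ℝ) :
    Integrable (fun x => (Complex.exp (Complex.I * ((l*x:ℝ):ℂ)) - 1)
      * (Complex.exp (Complex.I * ((m*x:ℝ):ℂ)) - 1)) ν := by
  apply Integrable.mono' ((integrable_min_sq ν hνint).const_mul (|l| * |m| + 4))
  · refine Measurable.aestronglyMeasurable ?_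
    apply Measurable.mul <;>
      exact (Complex.measurable_exp.comp (measurable_const.mul
        (Complex.measurable_ofReal.comp (measurable_const.mul measurable_id)))).sub measurable_const
  · refine Eventually.of_forall fun x => ?_
    rw [norm_mul]
    rcases le_or_gt 1 |x| with h1 | h1
    · have hx1 : (1:ℝ) ≤ x^2 := by nlinarith [_root_.sq_abs x]
      rw [min_eq_right hx1]
      have := abs_expI_le_two (l*x); have := abs_expI_le_two (m*x)
      have h3 := norm_nonneg (Complex.exp (Complex.I * ((l*x:ℝ):ℂ)) - 1)
      have h4 := norm_nonneg (Complex.exp (Complex.I * ((m*x:ℝ):ℂ)) - 1)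
      nlinarith [abs_nonneg l, abs_nonneg m, mul_nonneg (abs_nonneg l) (abs_nonneg m)]
    · have hx1 : x^2 ≤ 1 := by nlinarith [_root_.sq_abs x, abs_nonneg x]
      rw [min_eq_left hx1]
      have h1' := abs_expI_le_abs (l*x); have h2' := abs_expI_le_abs (m*x)
      have h3 := norm_nonneg (Complex.exp (Complex.I * ((l*x:ℝ):ℂ)) - 1)
      have h4 := norm_nonneg (Complex.exp (Complex.I * ((m*x:ℝ):ℂ)) - 1)
      calc ‖_‖ * ‖_‖ ≤ |l*x| * |m*x| := by nlinarith [abs_nonneg (l*x), abs_nonneg (m*x)]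
      _ = |l| * |m| * x^2 := by rw [abs_mul, abs_mul, ← _root_.sq_abs x]; ring
      _ ≤ (|l| * |m| + 4) * x^2 := by nlinarith [sq_nonneg x]

end main

noncomputable def Phi (a b : ℝ) (ν : Measure ℝ) (l : ℝ) : ℂ :=
  ((a * l ^ 2 : ℝ) : ℂ) + Complex.I * ((b * l : ℝ) : ℂ) + ∫ x, gg l x ∂ν

section phi
variable {ν : Measure ℝ} {a b : ℝ}

lemma Phi_zero : Phi a b ν 0 = 0 := by
  unfold Phi
  have : ∀ x : ℝ, gg 0 x = 0 := by
    intro x; unfold gg; simp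
  simp [this]

lemma gg_re (l x : ℝ) : (gg l x).re = 1 - Real.cos (l * x) := by
  unfold gg
  rw [show Complex.I * ((l:ℂ) * (x:ℂ)) = ((l*x : ℝ):ℂ) * Complex.I by push_cast; ring,
    Complex.exp_mul_I]
  split_ifs <;>
    simp [Complex.add_re, Complex.sub_re, Complex.mul_re, ← Complex.ofReal_mul,
      Complex.cos_ofReal_re, Complex.sin_ofReal_im, Complex.cos_ofReal_im,
      Complex.sin_ofReal_re]

lemma Phi_re (hνint : ∫⁻ x, ENNReal.ofReal (min (x ^ 2) 1) ∂ν < ⊤) (l : ℝ) :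
    (Phi a b ν l).re = a * l^2 + ∫ x, (1 - Real.cos (l*x)) ∂ν := by
  unfold Phi
  rw [Complex.add_re, Complex.add_re]
  have h1 : (((a * l ^ 2 : ℝ) : ℂ)).re = a * l^2 := Complex.ofReal_re _
  have h2 : (Complex.I * ((b * l : ℝ) : ℂ)).re = 0 := by simp
  have h3 : (∫ x, gg l x ∂ν).re = ∫ x, (gg l x).re ∂ν := by
    have h := integral_re (μ := ν) (gg_integrable hνint l)
    simpa [RCLike.re_to_complex] using h.symm
  rw [h1, h2, h3, add_zero]
  congr 1
  exact integral_congr_ae (Eventually.of_forall fun x => gg_re l x)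

lemma Phi_re_nonneg (hνint : ∫⁻ x, ENNReal.ofReal (min (x ^ 2) 1) ∂ν < ⊤) (ha : 0 ≤ a) (l : ℝ) :
    0 ≤ (Phi a b ν l).re := by
  rw [Phi_re hνint l]
  have : 0 ≤ ∫ x, (1 - Real.cos (l*x)) ∂ν :=
    integral_nonneg fun x => one_sub_cos_nonneg _
  nlinarith [sq_nonneg l]

lemma integral_one_sub_cos_le (hνint : ∫⁻ x, ENNReal.ofReal (min (x ^ 2) 1) ∂ν < ⊤)
    (ha : 0 ≤ a) (l : ℝ) :
    a * l^2 + ∫ x, (1 - Real.cos (l*x)) ∂ν ≤ ‖Phi a b ν l‖ := by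
  rw [← Phi_re hνint l]
  exact Complex.re_le_norm _
end phi

section phi2
variable {ν : Measure ℝ} {a b : ℝ}

lemma gg_add (l m x : ℝ) :
    gg (l+m) x = gg l x + gg m x
      - (Complex.exp (Complex.I * ((l*x:ℝ):ℂ)) - 1) * (Complex.exp (Complex.I * ((m*x:ℝ):ℂ)) - 1) := by
  unfold gg
  have hexp : Complex.exp (Complex.I * (((l+m):ℝ) * (x:ℂ))) =
      Complex.exp (Complex.I * ((l*x:ℝ):ℂ)) * Complex.exp (Complex.I * ((m*x:ℝ):ℂ)) := by
    rw [← Complex.exp_add]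
    push_cast
    ring_nf
  push_cast
  push_cast at hexp
  rw [hexp]
  ring

lemma Phi_add (hνint : ∫⁻ x, ENNReal.ofReal (min (x ^ 2) 1) ∂ν < ⊤) (l m : ℝ) :
    Phi a b ν (l+m) = Phi a b ν l + Phi a b ν m + 2*a*l*m
      - ∫ x, (Complex.exp (Complex.I * ((l*x:ℝ):ℂ)) - 1) * (Complex.exp (Complex.I * ((m*x:ℝ):ℂ)) - 1) ∂ν := by
  unfold Phi
  have hl' := gg_integrable hνint l
  have hm' := gg_integrable hνint m
  have hE' := EE_integrable hνint l m
  have hint : ∫ x, gg (l+m) x ∂ν = ∫ x, gg l x ∂ν + ∫ x, gg m x ∂ν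
      - ∫ x, (Complex.exp (Complex.I * ((l*x:ℝ):ℂ)) - 1) * (Complex.exp (Complex.I * ((m*x:ℝ):ℂ)) - 1) ∂ν := by
    have h1 : ∫ x, gg (l+m) x ∂ν = ∫ x, (gg l x + gg m x
        - (Complex.exp (Complex.I * ((l*x:ℝ):ℂ)) - 1) * (Complex.exp (Complex.I * ((m*x:ℝ):ℂ)) - 1)) ∂ν :=
      integral_congr_ae (Eventually.of_forall fun x => gg_add l m x)
    have h2 : ∫ x, (gg l x + gg m x
        - (Complex.exp (Complex.I * ((l*x:ℝ):ℂ)) - 1) * (Complex.exp (Complex.I * ((m*x:ℝ):ℂ)) - 1)) ∂ν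
        = (∫ x, (gg l x + gg m x) ∂ν)
          - ∫ x, (Complex.exp (Complex.I * ((l*x:ℝ):ℂ)) - 1) * (Complex.exp (Complex.I * ((m*x:ℝ):ℂ)) - 1) ∂ν :=
      integral_sub (hl'.add hm') hE'
    have h3 : ∫ x, (gg l x + gg m x) ∂ν = ∫ x, gg l x ∂ν + ∫ x, gg m x ∂ν :=
      integral_add hl' hm'
    rw [h1, h2, h3]
  rw [hint]
  push_cast
  ring

lemma norm_int_EE_le (hνint : ∫⁻ x, ENNReal.ofReal (min (x ^ 2) 1) ∂ν < ⊤) (l m t : ℝ) (ht : 0 < t) :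
    ‖∫ x, (Complex.exp (Complex.I * ((l*x:ℝ):ℂ)) - 1) * (Complex.exp (Complex.I * ((m*x:ℝ):ℂ)) - 1) ∂ν‖
      ≤ t * ∫ x, (1 - Real.cos (l*x)) ∂ν + (1/t) * ∫ x, (1 - Real.cos (m*x)) ∂ν := by
  have h1 : ‖∫ x, (Complex.exp (Complex.I * ((l*x:ℝ):ℂ)) - 1) * (Complex.exp (Complex.I * ((m*x:ℝ):ℂ)) - 1) ∂ν‖
      ≤ ∫ x, ‖(Complex.exp (Complex.I * ((l*x:ℝ):ℂ)) - 1) * (Complex.exp (Complex.I * ((m*x:ℝ):ℂ)) - 1)‖ ∂ν := by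
    exact norm_integral_le_integral_norm _
  refine h1.trans ?_
  have h2 : ∫ x, ‖(Complex.exp (Complex.I * ((l*x:ℝ):ℂ)) - 1) * (Complex.exp (Complex.I * ((m*x:ℝ):ℂ)) - 1)‖ ∂ν
      ≤ ∫ x, (t * (1 - Real.cos (l*x)) + (1/t) * (1 - Real.cos (m*x))) ∂ν := by
    apply integral_mono (EE_integrable hνint l m).norm
    · exact ((one_sub_cos_integrable hνint l).const_mul t).add
        ((one_sub_cos_integrable hνint m).const_mul (1/t))
    · intro x
      dsimp only
      have hu := sq_abs_expI (l*x)
      have hv := sq_abs_expI (m*x)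
      have hu0 := norm_nonneg (Complex.exp (Complex.I * ((l*x:ℝ):ℂ)) - 1)
      have hv0 := norm_nonneg (Complex.exp (Complex.I * ((m*x:ℝ):ℂ)) - 1)
      rw [norm_mul]
      have key : ∀ u v : ℝ, 0 ≤ u → 0 ≤ v → 2*(u*v) ≤ t*u^2 + v^2/t := by
        intro u v hu' hv'
        have h0 : 2*(u*v)*t ≤ t^2*u^2 + v^2 := by nlinarith [sq_nonneg (t*u - v)]
        have hrw : t*u^2 + v^2/t = (t^2*u^2 + v^2)/t := by field_simp
        have hrw2 : 2*(u*v) = (2*(u*v)*t)/t := by field_simp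
        rw [hrw, hrw2]
        gcongr
      have hkey := key _ _ hu0 hv0
      rw [hu, hv] at hkey
      have hd : 2 * (1 - Real.cos (m * x)) / t = 2 * ((1/t) * (1 - Real.cos (m * x))) := by
        field_simp
      rw [hd] at hkey
      linarith
  refine h2.trans ?_
  rw [integral_add ((one_sub_cos_integrable hνint l).const_mul t)
    ((one_sub_cos_integrable hνint m).const_mul (1/t)),
    integral_const_mul, integral_const_mul]

lemma Phi_add_bound (hνint : ∫⁻ x, ENNReal.ofReal (min (x ^ 2) 1) ∂ν < ⊤) (ha : 0 ≤ a)
    (l m t : ℝ) (hl : 0 ≤ l) (hm : 0 ≤ m) (ht : 0 < t) :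
    ‖Phi a b ν (l+m)‖ ≤ (1+2*t) * ‖Phi a b ν l‖
      + (1+2/t) * ‖Phi a b ν m‖ := by
  have hAl := integral_one_sub_cos_le (a := a) (b := b) hνint ha l
  have hAm := integral_one_sub_cos_le (a := a) (b := b) hνint ha m
  have hIl : 0 ≤ ∫ x, (1 - Real.cos (l*x)) ∂ν := integral_nonneg fun x => one_sub_cos_nonneg _
  have hIm : 0 ≤ ∫ x, (1 - Real.cos (m*x)) ∂ν := integral_nonneg fun x => one_sub_cos_nonneg _
  have hEE := norm_int_EE_le (ν := ν) hνint l m t ht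
  have htri : ‖Phi a b ν (l+m)‖ ≤ ‖Phi a b ν l‖ + ‖Phi a b ν m‖
      + 2*a*l*m + ‖∫ x, (Complex.exp (Complex.I * ((l*x:ℝ):ℂ)) - 1) * (Complex.exp (Complex.I * ((m*x:ℝ):ℂ)) - 1) ∂ν‖ := by
    rw [Phi_add hνint l m]
    calc ‖_‖ ≤ ‖Phi a b ν l + Phi a b ν m + 2*a*l*m‖
        + ‖∫ x, (Complex.exp (Complex.I * ((l*x:ℝ):ℂ)) - 1) * (Complex.exp (Complex.I * ((m*x:ℝ):ℂ)) - 1) ∂ν‖ :=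
          norm_sub_le _ _
    _ ≤ _ := by
          have : ‖Phi a b ν l + Phi a b ν m + 2*a*l*m‖
              ≤ ‖Phi a b ν l‖ + ‖Phi a b ν m‖ + ‖(2*a*l*m : ℂ)‖ :=
            (norm_add_le _ _).trans (by gcongr; exact norm_add_le _ _)
          have h2 : ‖(2*a*l*m : ℂ)‖ = 2*a*l*m := by
            rw [show ((2*a*l*m : ℂ)) = (((2*a*l*m : ℝ)):ℂ) by push_cast; ring, Complex.norm_real, Real.norm_eq_abs]
            exact _root_.abs_of_nonneg (by positivity)
          linarith
  -- AM-GM on the 2*a*l*m term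
  have hamgm : 2*a*l*m ≤ t*(a*l^2) + (1/t)*(a*m^2) := by
    have h0 : 2*a*l*m*t ≤ t^2*(a*l^2) + a*m^2 := by
      nlinarith [mul_nonneg ha (sq_nonneg (t*l - m))]
    have hrw : t*(a*l^2) + (1/t)*(a*m^2) = (t^2*(a*l^2) + a*m^2)/t := by
      field_simp
    have hrw2 : 2*a*l*m = (2*a*l*m*t)/t := by field_simp
    rw [hrw, hrw2]
    gcongr
  have ht' : 0 < 1/t := by positivity
  have hEE' : ‖∫ x, (Complex.exp (Complex.I * ((l*x:ℝ):ℂ)) - 1) * (Complex.exp (Complex.I * ((m*x:ℝ):ℂ)) - 1) ∂ν‖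
      ≤ t * (∫ x, (1 - Real.cos (l*x)) ∂ν) + (1/t) * (∫ x, (1 - Real.cos (m*x)) ∂ν) := hEE
  have P1 : t*(a*l^2) + t*(∫ x, (1 - Real.cos (l*x)) ∂ν) ≤ t * ‖Phi a b ν l‖ := by
    have := mul_le_mul_of_nonneg_left hAl ht.le
    nlinarith
  have P2 : (1/t)*(a*m^2) + (1/t)*(∫ x, (1 - Real.cos (m*x)) ∂ν) ≤ (1/t) * ‖Phi a b ν m‖ := by
    have := mul_le_mul_of_nonneg_left hAm ht'.le
    nlinarith
  have q1 : 0 ≤ t * ‖Phi a b ν l‖ := mul_nonneg ht.le (norm_nonneg _)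
  have q2 : 0 ≤ (1/t) * ‖Phi a b ν m‖ := mul_nonneg ht'.le (norm_nonneg _)
  have h2t : (2:ℝ)/t = 2*(1/t) := by ring
  nlinarith [htri, hamgm, hEE', P1, P2, q1, q2]
end phi2

section phi3
variable {ν : Measure ℝ} {a b : ℝ}

lemma gg_cont (x : ℝ) : Continuous (fun l => gg l x) := by
  unfold gg
  apply Continuous.add
  · apply Continuous.sub continuous_const
    exact Complex.continuous_exp.comp (continuous_const.mul
      ((Complex.continuous_ofReal.comp continuous_id).mul continuous_const))
  · exact Continuous.mul (continuous_const.mul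
      ((Complex.continuous_ofReal.comp continuous_id).mul continuous_const)) continuous_const

lemma Phi_cont (hνint : ∫⁻ x, ENNReal.ofReal (min (x ^ 2) 1) ∂ν < ⊤) :
    Continuous (Phi a b ν) := by
  have h1 : Continuous (fun l : ℝ => ∫ x, gg l x ∂ν) := by
    rw [continuous_iff_continuousAt]
    intro l₀
    apply continuousAt_of_dominated (bound := fun x => ((|l₀|+1)+2)*((|l₀|+1)^2+2) * min (x^2) 1)
    · exact Eventually.of_forall fun l => (gg_meas l).aestronglyMeasurable
    · filter_upwards [eventually_abs_sub_lt l₀ one_pos] with l hl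
      refine Eventually.of_forall fun x => ?_
      refine (gg_bound l x).trans ?_
      have h1 : |l| ≤ |l₀| + 1 := by
        have h := abs_sub_abs_le_abs_sub l l₀
        linarith
      have h2 : l^2 ≤ (|l₀|+1)^2 := by
        rw [← _root_.sq_abs l]
        exact pow_le_pow_left₀ (abs_nonneg l) h1 2
      have hmin : 0 ≤ min (x^2) 1 := le_min (sq_nonneg x) one_pos.le
      have h0 : 0 ≤ |l₀| + 1 := by positivity
      apply mul_le_mul_of_nonneg_right _ hmin
      apply mul_le_mul (by linarith) (by linarith) (by positivity) (by positivity)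
    · exact (integrable_min_sq ν hνint).const_mul _
    · exact Eventually.of_forall fun x => (gg_cont x).continuousAt
  unfold Phi
  apply Continuous.add
  · apply Continuous.add
    · exact Complex.continuous_ofReal.comp (by continuity)
    · exact continuous_const.mul (Complex.continuous_ofReal.comp (by continuity))
  · exact h1

end phi3

lemma exp_two_lt_eight : Real.exp 2 < 8 := by
  have h := Real.exp_one_lt_d9
  have : Real.exp 2 = Real.exp 1 * Real.exp 1 := by
    rw [← Real.exp_add]; norm_num
  rw [this]
  nlinarith [Real.exp_pos 1]

lemma one_add_div_pow_le (N : ℕ) (hN : 1 ≤ N) (n : ℕ) (hn : n ≤ N) :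
    (1 + 2/(N:ℝ))^n ≤ 8 := by
  have hN0 : (0:ℝ) < N := by exact_mod_cast hN
  have h1 : (1 + 2/(N:ℝ)) ≤ Real.exp (2/N) := by
    have := Real.add_one_le_exp (2/(N:ℝ))
    linarith
  have h2 : (1 + 2/(N:ℝ))^n ≤ (1 + 2/(N:ℝ))^N := by
    apply pow_le_pow_right₀ (le_add_of_nonneg_right (by positivity)) hn
  have h3 : (1 + 2/(N:ℝ))^N ≤ (Real.exp (2/N))^N := by
    apply pow_le_pow_left₀ (by positivity) h1
  have h4 : (Real.exp (2/(N:ℝ)))^N = Real.exp 2 := by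
    rw [← Real.exp_nat_mul]
    congr 1
    field_simp
  calc (1 + 2/(N:ℝ))^n ≤ (Real.exp (2/N))^N := h2.trans h3
  _ = Real.exp 2 := h4
  _ ≤ 8 := exp_two_lt_eight.le

section phi4
variable {ν : Measure ℝ} {a b : ℝ}

lemma Phi_iter (hνint : ∫⁻ x, ENNReal.ofReal (min (x ^ 2) 1) ∂ν < ⊤) (ha : 0 ≤ a)
    (l₀ : ℝ) (hl₀ : 0 < l₀) (M : ℝ)
    (hM : ∀ μ ∈ Icc (0:ℝ) l₀, ‖Phi a b ν μ‖ ≤ M)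
    (t : ℝ) (ht : 0 < t) :
    ∀ n : ℕ, ∀ μ ∈ Icc (0:ℝ) l₀, ‖Phi a b ν (μ + n*l₀)‖
      ≤ (1+2*t)^n * M + (1+2/t) * ‖Phi a b ν l₀‖ * n * (1+2*t)^n := by
  intro n
  induction n with
  | zero => intro μ hμ; simpa using hM μ hμ
  | succ n ih =>
    intro μ hμ
    have hrw : μ + ((n:ℕ)+1:ℕ)*l₀ = (μ + n*l₀) + l₀ := by push_cast; ring
    rw [hrw]
    have hstep := Phi_add_bound (b := b) hνint ha (μ + n*l₀) l₀ t
      (by have := hμ.1; positivity) hl₀.le ht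
    have hih := ih μ hμ
    have hpow1 : (1:ℝ) ≤ (1+2*t)^n := one_le_pow₀ (by linarith)
    have hpow0 : (0:ℝ) < (1+2*t) := by linarith
    have hε0 : 0 ≤ ‖Phi a b ν l₀‖ := norm_nonneg _
    have hM0 : 0 ≤ M := le_trans (norm_nonneg _) (hM 0 ⟨le_refl _, hl₀.le⟩)
    have ht2 : 0 < 1+2/t := by positivity
    have key : (1+2*t) * ((1+2*t)^n * M + (1+2/t) * ‖Phi a b ν l₀‖ * n * (1+2*t)^n)
        + (1+2/t) * ‖Phi a b ν l₀‖
        ≤ (1+2*t)^(n+1) * M + (1+2/t) * ‖Phi a b ν l₀‖ * (n+1) * (1+2*t)^(n+1) := by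
      have hpow : (1+2*t)^(n+1) = (1+2*t) * (1+2*t)^n := by ring
      rw [hpow]
      have h1 : (1:ℝ) ≤ (1+2*t) * (1+2*t)^n := by nlinarith
      nlinarith [mul_nonneg (mul_nonneg ht2.le hε0) (sub_nonneg.2 h1)]
    calc ‖Phi a b ν ((μ + n*l₀) + l₀)‖
        ≤ (1+2*t) * ‖Phi a b ν (μ + n*l₀)‖
          + (1+2/t) * ‖Phi a b ν l₀‖ := hstep
      _ ≤ (1+2*t) * ((1+2*t)^n * M + (1+2/t) * ‖Phi a b ν l₀‖ * n * (1+2*t)^n)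
          + (1+2/t) * ‖Phi a b ν l₀‖ := by nlinarith [mul_le_mul_of_nonneg_left hih hpow0.le]
      _ ≤ _ := by push_cast; exact key

end phi4

section phi5
variable {ν : Measure ℝ} {a b : ℝ}

lemma exists_T0 (hνint : ∫⁻ x, ENNReal.ofReal (min (x ^ 2) 1) ∂ν < ⊤) (ha : 0 ≤ a)
    (hfint : IntegrableOn (fun l : ℝ => 1 / ‖(1:ℂ) + Phi a b ν l‖) (Set.Ioi 0)) :
    ∃ T₀ : ℝ, 1 ≤ T₀ ∧ ∀ l, T₀ < l → 1 < ‖Phi a b ν l‖ := by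
  set f : ℝ → ℝ := fun l => 1 / ‖(1:ℂ) + Phi a b ν l‖ with hf
  -- δ₀
  have hcont : Continuous (fun l => ‖Phi a b ν l‖) :=
    continuous_norm.comp (Phi_cont hνint)
  have hc0 : ContinuousAt (fun l => ‖Phi a b ν l‖) 0 := hcont.continuousAt
  have h00 : ‖Phi a b ν 0‖ = 0 := by rw [Phi_zero]; simp
  obtain ⟨δ, hδpos, hδ⟩ : ∃ δ > 0, ∀ μ : ℝ, |μ - 0| < δ → |‖Phi a b ν μ‖ - ‖Phi a b ν 0‖| < 1 := by
    have := Metric.continuousAt_iff.1 hc0 1 one_pos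
    obtain ⟨δ, hδpos, hδ⟩ := this
    exact ⟨δ, hδpos, fun μ hμ => by simpa [Real.dist_eq] using hδ (by simpa [Real.dist_eq] using hμ)⟩
  set δ₀ : ℝ := min (δ/2) 1 with hδ₀def
  have hδ₀pos : 0 < δ₀ := lt_min (by linarith) one_pos
  have hδ₀le1 : δ₀ ≤ 1 := min_le_right _ _
  have hδ₀ : ∀ μ ∈ Icc (0:ℝ) δ₀, ‖Phi a b ν μ‖ ≤ 1 := by
    intro μ hμ
    have h1 : |μ - 0| < δ := by
      rw [sub_zero, _root_.abs_of_nonneg hμ.1]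
      calc μ ≤ δ₀ := hμ.2
      _ ≤ δ/2 := min_le_left _ _
      _ < δ := by linarith
    have := hδ μ h1
    rw [h00] at this
    have h2 := abs_le.1 this.le
    linarith [h2.2, abs_nonneg (‖Phi a b ν μ‖ - 0)]
  -- the set W
  set W : Set ℝ := {l : ℝ | 0 < l ∧ ‖Phi a b ν l‖ ≤ 7} with hWdef
  have hWmeas : MeasurableSet W := by
    have : W = Ioi 0 ∩ (fun l => ‖Phi a b ν l‖) ⁻¹' (Iic 7) := by
      ext l; simp [hWdef, mem_Ioi, and_comm]
    rw [this]
    exact measurableSet_Ioi.inter (hcont.measurable measurableSet_Iic)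
  have hfnn : ∀ l : ℝ, 0 ≤ f l := fun l => by positivity
  -- abs (1 + Phi) ≤ 1 + abs Phi
  have habs_le : ∀ l : ℝ, ‖(1:ℂ) + Phi a b ν l‖ ≤ 1 + ‖Phi a b ν l‖ := by
    intro l
    calc ‖(1:ℂ) + Phi a b ν l‖ ≤ ‖(1:ℂ)‖ + ‖Phi a b ν l‖ :=
      norm_add_le _ _
    _ = 1 + ‖Phi a b ν l‖ := by rw [norm_one]
  have hWf : ∀ l ∈ W, (1:ℝ)/8 ≤ f l := by
    intro l hl
    have h1 : ‖(1:ℂ) + Phi a b ν l‖ ≤ 8 := le_trans (habs_le l) (by linarith [hl.2])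
    have h2 : 0 < ‖(1:ℂ) + Phi a b ν l‖ := by
      have : (1:ℝ) ≤ ((1:ℂ) + Phi a b ν l).re := by
        rw [Complex.add_re, Complex.one_re]
        linarith [Phi_re_nonneg (b := b) hνint ha l]
      linarith [le_trans this (Complex.re_le_norm _)]
    rw [hf]
    exact one_div_le_one_div_of_le h2 h1
  -- W has finite measure
  have hWvol : volume W ≠ ⊤ := by
    intro htop
    have hWsub : W ⊆ Ioi 0 := fun l hl => hl.1
    have hlin : ∫⁻ l in W, ENNReal.ofReal (f l) ∂volume ≤ ∫⁻ l in Ioi 0, ENNReal.ofReal (f l) ∂volume :=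
      lintegral_mono_set hWsub
    have heq : ∫⁻ l in Ioi 0, ENNReal.ofReal (f l) ∂volume = ENNReal.ofReal (∫ l in Ioi 0, f l) := by
      rw [← ofReal_integral_eq_lintegral_ofReal hfint (Eventually.of_forall hfnn)]
    have hlow : ENNReal.ofReal (1/8) * volume W ≤ ∫⁻ l in W, ENNReal.ofReal (f l) ∂volume := by
      calc ENNReal.ofReal (1/8) * volume W = ∫⁻ _ in W, ENNReal.ofReal (1/8) ∂volume := by
            rw [setLIntegral_const]
      _ ≤ _ := setLIntegral_mono' hWmeas (fun l hl => ENNReal.ofReal_le_ofReal (hWf l hl))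
    rw [htop] at hlow
    have : ENNReal.ofReal (1/8) * (⊤:ENNReal) = ⊤ := by
      rw [ENNReal.mul_top]
      simp [ENNReal.ofReal_eq_zero]
    rw [this] at hlow
    have : (⊤:ENNReal) ≤ ENNReal.ofReal (∫ l in Ioi 0, f l) := le_trans hlow (heq ▸ hlin)
    exact (lt_irrefl ⊤ (lt_of_le_of_lt this (ENNReal.ofReal_lt_top))).elim
  -- main contradiction
  by_contra hcon
  push_neg at hcon
  have hstep : ∀ T : ℝ, ∃ l₀, max T 1 < l₀ ∧ ‖Phi a b ν l₀‖ ≤ 1 := by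
    intro T
    obtain ⟨l, hl1, hl2⟩ := hcon (max T 1) (le_max_right _ _)
    exact ⟨l, hl1, hl2⟩
  have hlb : ∀ n : ℕ, ENNReal.ofReal δ₀ ≤ volume (W ∩ Ioi (n:ℝ)) := by
    intro n
    obtain ⟨l₀, hl₀gt, hl₀le⟩ := hstep n
    have hl₀pos : (0:ℝ) < l₀ := lt_of_lt_of_le one_pos (le_trans (le_max_right _ _) hl₀gt.le)
    have hsub : Ioc l₀ (l₀ + δ₀) ⊆ W ∩ Ioi (n:ℝ) := by
      intro y hy
      have hy1 : l₀ < y := hy.1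
      have hy2 : y ≤ l₀ + δ₀ := hy.2
      have hs : y - l₀ ∈ Icc (0:ℝ) δ₀ := ⟨by linarith, by linarith⟩
      have hbnd := Phi_add_bound (b := b) hνint ha l₀ (y - l₀) 1 hl₀pos.le hs.1 one_pos
      rw [show l₀ + (y - l₀) = y by ring] at hbnd
      have habs_s : ‖Phi a b ν (y - l₀)‖ ≤ 1 := hδ₀ _ hs
      constructor
      · constructor
        · linarith
        · norm_num at hbnd ⊢
          linarith
      · have : (n:ℝ) < l₀ := lt_of_le_of_lt (le_max_left _ _) hl₀gt
        exact lt_trans this hy1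
    calc ENNReal.ofReal δ₀ = volume (Ioc l₀ (l₀ + δ₀)) := by
          rw [Real.volume_Ioc]; congr 1; ring
    _ ≤ volume (W ∩ Ioi (n:ℝ)) := measure_mono hsub
  have hmono : Antitone (fun n : ℕ => W ∩ Ioi (n:ℝ)) := by
    intro i j hij
    apply inter_subset_inter_right
    intro x hx
    exact lt_of_le_of_lt (by exact_mod_cast hij) (show (j:ℝ) < x from hx)
  have hiInter : (⋂ n : ℕ, W ∩ Ioi (n:ℝ)) = ∅ := by
    ext x
    simp only [mem_iInter, mem_inter_iff, mem_Ioi, mem_empty_iff_false, iff_false]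
    intro hx
    obtain ⟨n, hn⟩ := exists_nat_gt x
    exact absurd (hx n).2 (not_lt.2 hn.le)
  have hfin : volume (W ∩ Ioi (((0:ℕ)):ℝ)) ≠ ⊤ :=
    ne_of_lt (lt_of_le_of_lt (measure_mono inter_subset_left) (lt_of_le_of_ne le_top hWvol))
  have htend := tendsto_measure_iInter_atTop (μ := volume)
    (fun n : ℕ => (hWmeas.inter measurableSet_Ioi).nullMeasurableSet) hmono ⟨0, hfin⟩
  rw [hiInter] at htend
  simp only [measure_empty] at htend
  have := ge_of_tendsto htend (Eventually.of_forall hlb)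
  exact absurd this (by simp [ENNReal.ofReal_pos, hδ₀pos, le_bot_iff, ENNReal.ofReal_eq_zero])

end phi5

section phi6
variable {ν : Measure ℝ} {a b : ℝ}

set_option maxHeartbeats 1000000 in
lemma Phi_lower (hνint : ∫⁻ x, ENNReal.ofReal (min (x ^ 2) 1) ∂ν < ⊤) (ha : 0 ≤ a)
    (hfint : IntegrableOn (fun l : ℝ => 1 / ‖(1:ℂ) + Phi a b ν l‖) (Set.Ioi 0))
    (T₀ : ℝ) (hT₀ : 1 ≤ T₀) (M : ℝ) (hM0 : 0 ≤ M)
    (hM : ∀ y ∈ Icc (0:ℝ) T₀, ‖Phi a b ν y‖ ≤ M) :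
    ∃ D : ℝ, 0 < D ∧ ∀ l₀ ∈ Ioc (0:ℝ) T₀, l₀^2 / D^2 ≤ ‖Phi a b ν l₀‖ := by
  set f : ℝ → ℝ := fun l => 1 / ‖(1:ℂ) + Phi a b ν l‖ with hfdef
  obtain ⟨V, hVdef⟩ : ∃ V : ℝ, V = ∫ l in Ioi (0:ℝ), f l := ⟨_, rfl⟩
  have hfnn : ∀ l : ℝ, 0 ≤ f l := fun l => by positivity
  have hV0 : 0 ≤ V := hVdef ▸ integral_nonneg hfnn
  set D : ℝ := (V+1)*(8*M+97) + T₀ with hDdef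
  have hD : 0 < D := by nlinarith
  have hDT : T₀ ≤ D := by nlinarith
  refine ⟨D, hD, ?_⟩
  intro l₀ hl₀
  by_contra hcon
  push_neg at hcon
  obtain ⟨ε, hεdef⟩ : ∃ e : ℝ, e = ‖Phi a b ν l₀‖ := ⟨_, rfl⟩
  rw [← hεdef] at hcon
  have hε0 : 0 ≤ ε := hεdef ▸ norm_nonneg _
  have hl₀pos : 0 < l₀ := hl₀.1
  have hl₀le : l₀ ≤ T₀ := hl₀.2
  have hD2 : (0:ℝ) < D^2 := pow_pos hD 2
  have hεD : ε * D^2 < l₀^2 := (lt_div_iff₀ hD2).1 hcon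
  set N : ℕ := ⌈D/l₀⌉₊ with hNdef
  have hDl : 0 < D/l₀ := div_pos hD hl₀pos
  have hN1 : 1 ≤ N := Nat.one_le_iff_ne_zero.2 (Nat.ceil_pos.2 hDl).ne'
  have hN1R : (1:ℝ) ≤ (N:ℝ) := by exact_mod_cast hN1
  have hNlb : D/l₀ ≤ (N:ℝ) := Nat.le_ceil _
  have hNl₀ : D ≤ (N:ℝ)*l₀ := by
    have := (div_le_iff₀ hl₀pos).1 hNlb
    linarith
  have hNub : (N:ℝ) < D/l₀ + 1 := Nat.ceil_lt_add_one hDl.le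
  have hNl₀2 : (N:ℝ)*l₀ ≤ 2*D := by
    have h1 : (N:ℝ)*l₀ < D + l₀ := by
      have := mul_lt_mul_of_pos_right hNub hl₀pos
      rw [add_mul, div_mul_cancel₀ _ (ne_of_gt hl₀pos), one_mul] at this
      exact this
    linarith
  have hεN2 : ε * (N:ℝ)^2 ≤ 4 := by
    have h1 : ε * D^2 * (N:ℝ)^2 ≤ l₀^2 * (N:ℝ)^2 :=
      mul_le_mul_of_nonneg_right hεD.le (sq_nonneg _)
    have h2 : l₀^2 * (N:ℝ)^2 = ((N:ℝ)*l₀)^2 := by ring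
    have hNl₀pos : (0:ℝ) ≤ (N:ℝ)*l₀ := mul_nonneg (Nat.cast_nonneg N) hl₀pos.le
    have h3 : ((N:ℝ)*l₀)^2 ≤ 4*D^2 := by nlinarith [hNl₀2, hNl₀pos, hD.le]
    have h4 : ε * (N:ℝ)^2 * D^2 ≤ 4 * D^2 := by nlinarith
    nlinarith
  -- bound on (0, N*l₀]
  have hbound : ∀ y ∈ Ioc (0:ℝ) ((N:ℝ)*l₀), ‖Phi a b ν y‖ ≤ 8*M + 96 := by
    intro y hy
    set k : ℕ := ⌈y/l₀⌉₊ with hkdef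
    have hyl : 0 < y/l₀ := div_pos hy.1 hl₀pos
    have hk1 : 1 ≤ k := Nat.one_le_iff_ne_zero.2 (Nat.ceil_pos.2 hyl).ne'
    have hkN : k ≤ N := Nat.ceil_le.2 (by rw [div_le_iff₀ hl₀pos]; exact hy.2)
    set n : ℕ := k - 1 with hndef
    have hcast : ((n:ℕ):ℝ) = (k:ℝ) - 1 := by
      rw [hndef, Nat.cast_sub hk1, Nat.cast_one]
    have hyk : y ≤ (k:ℝ)*l₀ := by
      have := Nat.le_ceil (y/l₀)
      have := mul_le_mul_of_nonneg_right this hl₀pos.le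
      rwa [div_mul_cancel₀ _ (ne_of_gt hl₀pos)] at this
    have hyk2 : ((k:ℝ)-1)*l₀ < y := by
      have h1 : (k:ℝ) < y/l₀ + 1 := Nat.ceil_lt_add_one hyl.le
      have := mul_lt_mul_of_pos_right (by linarith : (k:ℝ) - 1 < y/l₀) hl₀pos
      rwa [div_mul_cancel₀ _ (ne_of_gt hl₀pos)] at this
    have hμmem : y - (n:ℝ)*l₀ ∈ Icc (0:ℝ) l₀ := by
      rw [mem_Icc, hcast]
      constructor
      · linarith [hyk2]
      · linarith [hyk]
    have hM' : ∀ μ ∈ Icc (0:ℝ) l₀, ‖Phi a b ν μ‖ ≤ M := fun μ hμ =>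
      hM μ ⟨hμ.1, le_trans hμ.2 hl₀le⟩
    have hNpos : (0:ℝ) < 1/(N:ℝ) := by positivity
    have hiter := Phi_iter (b := b) hνint ha l₀ hl₀pos M hM' (1/(N:ℝ)) hNpos n _ hμmem
    rw [show y - (n:ℝ)*l₀ + (n:ℝ)*l₀ = y by ring] at hiter
    have hone : 1 + 2*(1/(N:ℝ)) = 1 + 2/(N:ℝ) := by ring
    rw [hone] at hiter
    have hnN : n ≤ N := le_trans (Nat.sub_le _ _) hkN
    have hp8 : (1 + 2/(N:ℝ))^n ≤ 8 := one_add_div_pow_le N hN1 n hnN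
    have hp0 : (0:ℝ) ≤ (1 + 2/(N:ℝ))^n := by positivity
    have hdiv : 2/(1/(N:ℝ)) = 2*(N:ℝ) := by
      field_simp
    rw [hdiv] at hiter
    have hnNR : ((n:ℕ):ℝ) ≤ (N:ℝ) := by exact_mod_cast hnN
    rw [← hεdef] at hiter
    have e0 : (0:ℝ) ≤ (1+2*(N:ℝ))*ε := mul_nonneg (by positivity) hε0
    have e1 : (1+2*(N:ℝ))*ε*((n:ℕ):ℝ) ≤ (1+2*(N:ℝ))*ε*(N:ℝ) :=
      mul_le_mul_of_nonneg_left hnNR e0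
    have e2 : (1+2*(N:ℝ))*ε*((n:ℕ):ℝ)*(1 + 2/(N:ℝ))^n ≤ (1+2*(N:ℝ))*ε*(N:ℝ)*8 :=
      mul_le_mul e1 hp8 hp0 (mul_nonneg e0 (Nat.cast_nonneg N))
    have e3 : (1+2*(N:ℝ))*ε*(N:ℝ)*8 ≤ 96 := by
      have hεN1 : ε*(N:ℝ) ≤ ε*(N:ℝ)^2 := by nlinarith [mul_nonneg hε0 (Nat.cast_nonneg N : (0:ℝ) ≤ N)]
      nlinarith
    have e4 : (1 + 2/(N:ℝ))^n * M ≤ 8*M := mul_le_mul_of_nonneg_right hp8 hM0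
    linarith [hiter, e2, e3, e4]
  -- integral lower bound
  have hIoc : IntegrableOn f (Ioc (0:ℝ) ((N:ℝ)*l₀)) := hfint.mono_set Ioc_subset_Ioi_self
  have hflb : ∀ y ∈ Ioc (0:ℝ) ((N:ℝ)*l₀), 1/(8*M+97) ≤ f y := by
    intro y hy
    have h1 : ‖(1:ℂ) + Phi a b ν y‖ ≤ 8*M + 97 := by
      calc ‖(1:ℂ) + Phi a b ν y‖ ≤ ‖(1:ℂ)‖ + ‖Phi a b ν y‖ :=
        norm_add_le _ _
      _ ≤ 1 + (8*M + 96) := by rw [norm_one]; linarith [hbound y hy]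
      _ = 8*M + 97 := by ring
    have h2 : 0 < ‖(1:ℂ) + Phi a b ν y‖ := by
      have h3 : (1:ℝ) ≤ ((1:ℂ) + Phi a b ν y).re := by
        rw [Complex.add_re, Complex.one_re]
        linarith [Phi_re_nonneg (b := b) hνint ha y]
      linarith [le_trans h3 (Complex.re_le_norm _)]
    exact one_div_le_one_div_of_le h2 h1
  have hvol : (volume (Ioc (0:ℝ) ((N:ℝ)*l₀))).toReal = (N:ℝ)*l₀ := by
    rw [Real.volume_Ioc, sub_zero, ENNReal.toReal_ofReal (by positivity)]
  have hconst : (1/(8*M+97)) * ((N:ℝ)*l₀) ≤ ∫ y in Ioc (0:ℝ) ((N:ℝ)*l₀), f y := by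
    have := setIntegral_ge_of_const_le (μ := volume) (f := f) (c := 1/(8*M+97))
      measurableSet_Ioc (by rw [Real.volume_Ioc]; exact ENNReal.ofReal_ne_top) hflb hIoc
    rw [measureReal_def, hvol, smul_eq_mul] at this
    linarith
  have hVub : ∫ y in Ioc (0:ℝ) ((N:ℝ)*l₀), f y ≤ V := by
    rw [hVdef]

    apply setIntegral_mono_set hfint (Eventually.of_forall hfnn)
    exact HasSubset.Subset.eventuallyLE Ioc_subset_Ioi_self
  have hfinal : (N:ℝ)*l₀ ≤ V * (8*M+97) := by
    have h97 : (0:ℝ) < 8*M+97 := by linarith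
    have := le_trans hconst hVub
    rw [div_mul_eq_mul_div, one_mul, div_le_iff₀ h97] at this
    linarith [this]
  nlinarith [hNl₀, hfinal]

end phi6

theorem stmt10 (a b : ℝ) (ha : 0 ≤ a) (ν : Measure ℝ) (hν0 : ν {0} = 0)
    (hνint : ∫⁻ x, ENNReal.ofReal (min (x ^ 2) 1) ∂ν < ⊤)
    (Ψ : ℝ → ℂ)
    (hΨ : ∀ l : ℝ, Ψ l = ((a * l ^ 2 : ℝ) : ℂ) + Complex.I * ((b * l : ℝ) : ℂ)
        + ∫ x, ((1 : ℂ) - Complex.exp (Complex.I * (l * x))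
            + Complex.I * (l * x) * (if |x| < 1 then 1 else 0)) ∂ν)
    (hA : ∀ q : ℝ, 0 < q →
        IntegrableOn (fun l : ℝ => 1 / ‖(q : ℂ) + Ψ l‖) (Set.Ioi 0)) :
    IntegrableOn (fun l : ℝ => min (l ^ 2) 1 / ‖Ψ l‖) (Set.Ioi 0) := by
  have hPhi : Ψ = Phi a b ν := funext fun l => by rw [hΨ l]; rfl
  rw [hPhi]
  have hA1 : IntegrableOn (fun l : ℝ => 1 / ‖(1:ℂ) + Phi a b ν l‖) (Set.Ioi 0) := by
    have h := hA 1 one_pos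
    rw [hPhi] at h
    simpa using h
  obtain ⟨T₀, hT₀1, hT₀⟩ := exists_T0 hνint ha hA1
  obtain ⟨C, hC⟩ := (isCompact_Icc : IsCompact (Icc (0:ℝ) T₀)).exists_bound_of_continuousOn
    (Phi_cont hνint).continuousOn
  set M := max C 0 with hMdef
  have hM0 : (0:ℝ) ≤ M := le_max_right _ _
  have hMb : ∀ y ∈ Icc (0:ℝ) T₀, ‖Phi a b ν y‖ ≤ M := fun y hy =>
    le_trans (by exact hC y hy) (le_max_left _ _)
  obtain ⟨D, hD, hlow⟩ := Phi_lower hνint ha hA1 T₀ hT₀1 M hM0 hMb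
  set CC := D^2 + 1 with hCCdef
  have hCC1 : (1:ℝ) ≤ CC := by nlinarith
  have hptw : ∀ l ∈ Ioi (0:ℝ), min (l^2) 1 ≤ CC * ‖Phi a b ν l‖ := by
    intro l hl
    rcases le_or_gt l T₀ with h | h
    · have h1 := hlow l ⟨hl, h⟩
      have h2 : l^2 ≤ ‖Phi a b ν l‖ * D^2 := (div_le_iff₀ (pow_pos hD 2)).1 h1
      calc min (l^2) 1 ≤ l^2 := min_le_left _ _
      _ ≤ ‖Phi a b ν l‖ * D^2 := h2
      _ ≤ CC * ‖Phi a b ν l‖ := by nlinarith [norm_nonneg (Phi a b ν l)]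
    · have h1 := hT₀ l h
      calc min (l^2) 1 ≤ 1 := min_le_right _ _
      _ ≤ ‖Phi a b ν l‖ := h1.le
      _ ≤ CC * ‖Phi a b ν l‖ := by nlinarith [norm_nonneg (Phi a b ν l)]
  have hpos : ∀ l ∈ Ioi (0:ℝ), 0 < ‖Phi a b ν l‖ := by
    intro l hl
    rcases le_or_gt l T₀ with h | h
    · exact lt_of_lt_of_le (div_pos (pow_pos hl 2) (pow_pos hD 2)) (hlow l ⟨hl, h⟩)
    · linarith [hT₀ l h]
  apply Integrable.mono' (hA1.const_mul (CC+1))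
  · apply Measurable.aestronglyMeasurable
    apply Measurable.div
    · exact (measurable_id.pow_const 2).min measurable_const
    · exact (continuous_norm.comp (Phi_cont hνint)).measurable
  · rw [ae_restrict_iff' measurableSet_Ioi]
    refine Eventually.of_forall fun l hl => ?_
    have h1 := hptw l hl
    have h2 := hpos l hl
    have hmin0 : (0:ℝ) ≤ min (l^2) 1 := le_min (sq_nonneg l) one_pos.le
    rw [Real.norm_eq_abs, _root_.abs_of_nonneg (div_nonneg hmin0 h2.le)]
    have habs1 : ‖(1:ℂ) + Phi a b ν l‖ ≤ 1 + ‖Phi a b ν l‖ := by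
      calc ‖(1:ℂ) + Phi a b ν l‖ ≤ ‖(1:ℂ)‖ + ‖Phi a b ν l‖ :=
        norm_add_le _ _
      _ = 1 + ‖Phi a b ν l‖ := by rw [norm_one]
    have habs1pos : 0 < ‖(1:ℂ) + Phi a b ν l‖ := by
      have h3 : (1:ℝ) ≤ ((1:ℂ) + Phi a b ν l).re := by
        rw [Complex.add_re, Complex.one_re]
        linarith [Phi_re_nonneg (b := b) hνint ha l]
      linarith [le_trans h3 (Complex.re_le_norm _)]
    have step1 : min (l^2) 1 / ‖Phi a b ν l‖ ≤ (CC+1)/(1 + ‖Phi a b ν l‖) := by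
      rw [div_le_div_iff₀ h2 (by positivity)]
      have hminabs : min (l^2) 1 * ‖Phi a b ν l‖ ≤ 1 * ‖Phi a b ν l‖ :=
        mul_le_mul_of_nonneg_right (min_le_right _ _) (norm_nonneg _)
      nlinarith
    refine step1.trans ?_
    rw [mul_one_div]
    exact div_le_div_of_nonneg_left (by linarith) habs1pos habs1
end
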